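/- Let R be a Boolean ring, I an ideal of R, and E a binary relation on R such that E f g implies (f+1)*g ∈ I. Then for every f ∈ R, every element lying both in Δ_f and in Δ_{f+1} belongs to I; that is, Δ_f ∩ Δ_{f+1} ⊆ I. -/

import Mathlib

private lemma desc_mem {R : Type*} [BooleanRing R] (I : Ideal R) (E : R → R → Prop)
    (hE : ∀ f g, E f g → (f + 1) * g ∈ I) (f : R) :
    ∀ h : R, Relation.ReflTransGen E f h → (f + 1) * h ∈ I := by
  intro h hrel
  induction hrel with
  | refl =>
      have : (f + 1) * f = 0 := by
        rw [add_mul, one_mul, BooleanRing.mul_self, BooleanRing.add_self]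
      rw [this]; exact I.zero_mem
  | @tail b c hb hbc ih =>
      have h1 : (f + 1) * ((b + 1) * c) ∈ I := I.mul_mem_left _ (hE _ _ hbc)
      have h2 : ((f + 1) * b) * c ∈ I := I.mul_mem_right _ ih
      have : (f + 1) * c = (f + 1) * ((b + 1) * c) + ((f + 1) * b) * c := by
        linear_combination -BooleanRing.add_self (f * c * b + c * b)
      rw [this]; exact I.add_mem h1 h2

private lemma span_mem {R : Type*} [BooleanRing R] (I : Ideal R) (E : R → R → Prop)
    (hE : ∀ f g, E f g → (f + 1) * g ∈ I) (f : R) :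
    ∀ g : R, g ∈ AddSubgroup.closure {h : R | Relation.ReflTransGen E f h} →
      (f + 1) * g ∈ I := by
  intro g hg
  induction hg using AddSubgroup.closure_induction with
  | mem x hx => exact desc_mem I E hE f x hx
  | zero => simpa using I.zero_mem
  | add x y _ _ hx hy => rw [mul_add]; exact I.add_mem hx hy
  | neg x _ hx => simpa using hx

/-- If `E` satisfies the edge property with respect to an ideal `I` of a
Boolean ring, then `Δ_f ∩ Δ_{f+1} ⊆ I`: every element lying both in the space
of descendants of `f` and in that of `f + 1` belongs to `I`. -/
theorem descendant_spaces_intersection_subset (R : Type*) [BooleanRing R]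
    (I : Ideal R) (E : R → R → Prop)
    (hE : ∀ f g, E f g → (f + 1) * g ∈ I) (f : R) :
    ∀ g : R,
      g ∈ AddSubgroup.closure {h : R | Relation.ReflTransGen E f h} →
      g ∈ AddSubgroup.closure {h : R | Relation.ReflTransGen E (f + 1) h} →
      g ∈ I := by
  intro g h1 h2
  have a1 : (f + 1) * g ∈ I := span_mem I E hE f g h1
  have a2 : (f + 1 + 1) * g ∈ I := span_mem I E hE (f + 1) g h2
  rw [add_assoc, BooleanRing.add_self, add_zero] at a2
  have : g = (f + 1) * g + f * g := by
    rw [add_mul, one_mul, add_comm, ← add_assoc, BooleanRing.add_self, zero_add]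
  rw [this]
  exact I.add_mem a1 a2
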